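/- arXiv:2101.00092 — 2 statements merged into one kernel-verified Lean document; each statement's English description precedes it below -/
import Mathlib

section
/- Let X be a set, B₁, B₂ : X → X operators, y ∈ X, and F(X) a nonempty family of membership functions X → [0,1] with F(y) ≠ 0 and F(B₂(y)) ≠ 0 for all F ∈ F(X). If the fuzzy rates ‖B₁‖_{B₂(y)} and ‖B₂‖_y exist (are finite), then ‖B₁∘B₂‖_y ≤ ‖B₁‖_{B₂(y)} · ‖B₂‖_y. -/
open Set

/-- ‖B₁ ∘ B₂‖_y ≤ ‖B₁‖_{B₂ y} · ‖B₂‖_y. -/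
theorem fuzzy_rate_comp {X : Type*} (B₁ B₂ : X → X) (y : X)
    (𝓕 : Set (X → ℝ)) (h𝓕 : 𝓕.Nonempty)
    (hmem : ∀ F ∈ 𝓕, ∀ x, F x ∈ Icc (0 : ℝ) 1)
    (hy : ∀ F ∈ 𝓕, 0 < F y) (hB2y : ∀ F ∈ 𝓕, 0 < F (B₂ y))
    (hbdd1 : BddAbove {x : ℝ | ∃ F ∈ 𝓕, x = F (B₁ (B₂ y)) / F (B₂ y)})
    (hbdd2 : BddAbove {x : ℝ | ∃ F ∈ 𝓕, x = F (B₂ y) / F y}) :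
    sSup {x : ℝ | ∃ F ∈ 𝓕, x = F ((B₁ ∘ B₂) y) / F y} ≤
      sSup {x : ℝ | ∃ F ∈ 𝓕, x = F (B₁ (B₂ y)) / F (B₂ y)} *
        sSup {x : ℝ | ∃ F ∈ 𝓕, x = F (B₂ y) / F y} := by
  set S₁ := {x : ℝ | ∃ F ∈ 𝓕, x = F (B₁ (B₂ y)) / F (B₂ y)}
  set S₂ := {x : ℝ | ∃ F ∈ 𝓕, x = F (B₂ y) / F y}
  obtain ⟨F₀, hF₀⟩ := h𝓕
  have hS1nonneg : ∀ x ∈ S₁, 0 ≤ x := by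
    rintro x ⟨F, hF, rfl⟩
    exact div_nonneg (hmem F hF _).1 (hB2y F hF).le
  have hS2nonneg : ∀ x ∈ S₂, 0 ≤ x := by
    rintro x ⟨F, hF, rfl⟩
    exact div_nonneg (hmem F hF _).1 (hy F hF).le
  have h1 : (0:ℝ) ≤ sSup S₁ :=
    le_trans (hS1nonneg _ ⟨F₀, hF₀, rfl⟩) (le_csSup hbdd1 ⟨F₀, hF₀, rfl⟩)
  have h2 : (0:ℝ) ≤ sSup S₂ :=
    le_trans (hS2nonneg _ ⟨F₀, hF₀, rfl⟩) (le_csSup hbdd2 ⟨F₀, hF₀, rfl⟩)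
  apply Real.sSup_le _ (mul_nonneg h1 h2)
  rintro x ⟨F, hF, rfl⟩
  have key : F ((B₁ ∘ B₂) y) / F y
      = (F (B₁ (B₂ y)) / F (B₂ y)) * (F (B₂ y) / F y) := by
    have hne : F (B₂ y) ≠ 0 := (hB2y F hF).ne'
    field_simp
    rfl
  rw [key]
  exact mul_le_mul (le_csSup hbdd1 ⟨F, hF, rfl⟩) (le_csSup hbdd2 ⟨F, hF, rfl⟩)
    (div_nonneg (hmem F hF _).1 (hy F hF).le) h1
end

section
/- Let U = ℝ × ℝ and let b be a real number with |b| ≥ 1. For μ, r > 0 define the membership function F_{(μ,r)} : U → [0,1] by F_{(μ,r)}(x,y) = exp(−(λ−μ)²) if x² + λy² = r² for some λ > 0 (with value 1 when λ = μ), and F_{(μ,r)}(x,y) = 0 otherwise. Let B(x,y) = (x, b·y). Then the fuzzy rate of B at the point (0, r) over the family {F_{(μ,r)} : μ > 0} (with r fixed) equals exp(1 − 1/b⁴): sup_{μ>0} F_{(μ,r)}(B(0,r)) / F_{(μ,r)}((0,r)) = e^{1 − 1/b⁴}. -/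
open Real
open scoped Classical

/-- Membership function of Example 2.1: F_{(μ,r)}(x,y) = exp(−(λ−μ)²) if
x² + λy² = r² for some λ > 0, and 0 otherwise. -/
noncomputable def memF (μ r : ℝ) (p : ℝ × ℝ) : ℝ :=
  if h : ∃ l : ℝ, 0 < l ∧ p.1 ^ 2 + l * p.2 ^ 2 = r ^ 2 then
    Real.exp (-(Classical.choose h - μ) ^ 2)
  else 0

lemma memF_eval (μ r y : ℝ) (hr : r ≠ 0) (hy : y ≠ 0) :
    memF μ r (0, y) = Real.exp (-(r ^ 2 / y ^ 2 - μ) ^ 2) := by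
  have hex : ∃ l : ℝ, 0 < l ∧ (0 : ℝ) ^ 2 + l * y ^ 2 = r ^ 2 :=
    ⟨r ^ 2 / y ^ 2, by positivity, by field_simp; ring⟩
  have h1 : memF μ r (0, y) = Real.exp (-(Classical.choose hex - μ) ^ 2) := by
    simp only [memF]
    rw [dif_pos hex]
  obtain ⟨hl, heq⟩ := Classical.choose_spec hex
  have hch : Classical.choose hex = r ^ 2 / y ^ 2 := by
    have hy2 : y ^ 2 ≠ 0 := pow_ne_zero 2 hy
    rw [eq_div_iff hy2]
    simpa using heq
  rw [h1, hch]

/-- for |b| ≥ 1, the fuzzy rate of B(x,y) = (x, by) at (0,r) over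
the family {F_{(μ,r)} : μ > 0} equals e^{1 − 1/b⁴}. -/
theorem fuzzy_rate_example_ge_one (b r : ℝ) (hb : 1 ≤ |b|) (hr : 0 < r) :
    sSup {x : ℝ | ∃ μ > 0,
        x = memF μ r (0, b * r) / memF μ r (0, r)} =
      Real.exp (1 - 1 / b ^ 4) := by
  have hb0 : b ≠ 0 := by
    intro h; rw [h] at hb; simp at hb; linarith
  have hb2 : 1 ≤ b ^ 2 := by nlinarith [sq_abs b, abs_nonneg b]
  set c : ℝ := 1 / b ^ 2 with hc_def
  have hc0 : 0 < c := by positivity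
  have hc1 : c ≤ 1 := by
    rw [hc_def, div_le_one (by positivity)]; exact hb2
  have hc2 : 1 - 1 / b ^ 4 = 1 - c ^ 2 := by
    rw [hc_def]; field_simp
  have key : ∀ μ : ℝ, memF μ r (0, b * r) / memF μ r (0, r) =
      Real.exp ((1 - μ) ^ 2 - (c - μ) ^ 2) := by
    intro μ
    have h1 : memF μ r (0, b * r) = Real.exp (-(c - μ) ^ 2) := by
      rw [memF_eval μ r (b * r) hr.ne' (mul_ne_zero hb0 hr.ne')]
      congr 2
      rw [hc_def]
      field_simp
    have h2 : memF μ r (0, r) = Real.exp (-(1 - μ) ^ 2) := by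
      rw [memF_eval μ r r hr.ne' hr.ne']
      congr 2
      field_simp
    rw [h1, h2, ← Real.exp_sub]
    ring_nf
  clear_value c
  rw [hc2]
  apply csSup_eq_of_forall_le_of_forall_lt_exists_gt
  · exact ⟨memF 1 r (0, b * r) / memF 1 r (0, r), 1, one_pos, rfl⟩
  · rintro x ⟨μ, hμ, rfl⟩
    rw [key μ]
    apply Real.exp_le_exp.mpr
    nlinarith
  · intro w hw
    by_cases hw0 : 0 < w
    · by_cases hcc : c = 1
      · refine ⟨memF 1 r (0, b * r) / memF 1 r (0, r), ⟨1, one_pos, rfl⟩, ?_⟩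
        rw [key 1, hcc]
        simpa using hw.trans_le (by simp [hcc])
      · have hclt : c < 1 := lt_of_le_of_ne hc1 hcc
        have hlog : Real.log w < 1 - c ^ 2 := by
          have := Real.log_lt_log hw0 hw
          rwa [Real.log_exp] at this
        set ε : ℝ := ((1 - c ^ 2) - Real.log w) / (2 * (1 - c)) / 2 with hε_def
        have hε0 : 0 < ε := by
          apply div_pos (div_pos (by linarith) (by linarith)) two_pos
        refine ⟨memF ε r (0, b * r) / memF ε r (0, r), ⟨ε, hε0, rfl⟩, ?_⟩
        rw [key ε]
        have hval : (1 - ε) ^ 2 - (c - ε) ^ 2 = 1 - c ^ 2 - 2 * ε * (1 - c) := by ring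
        have h1c : (1 : ℝ) - c ≠ 0 := by intro h; apply hcc; linarith
        have hε2 : 2 * ε * (1 - c) = ((1 - c ^ 2) - Real.log w) / 2 := by
          rw [hε_def]; field_simp
        have : Real.log w < (1 - ε) ^ 2 - (c - ε) ^ 2 := by
          rw [hval, hε2]; linarith
        calc w = Real.exp (Real.log w) := (Real.exp_log hw0).symm
          _ < _ := Real.exp_lt_exp.mpr this
    · refine ⟨memF 1 r (0, b * r) / memF 1 r (0, r), ⟨1, one_pos, rfl⟩, ?_⟩
      rw [key 1]
      exact lt_of_le_of_lt (not_lt.mp hw0) (Real.exp_pos _)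
end
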